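/- Constant dynamics, inductive case: suppose the vector fields are constant, i.e., f q = fun _ => a q for a fixed map a : Q → E, and suppose Q has at least two elements. Then for every q : Q, every i ≥ 1, every x₀ : E, and every τ ≥ 0: (x₀, τ) ∈ X q i if and only if there exist a mode q' : Q with q' ≠ q and δ ≥ 0 such that (x₀ + δ • a q, τ + δ) ∈ X q' (i-1) and φ₁ (x₀ + h • a q) (τ + h) for all h ∈ Set.Icc 0 δ. (Paper's Corollary 2 specialized to equation (4).) -/

import Mathlib

open Set

noncomputable section

/-- The state space: `EuclideanSpace ℝ (Fin n)`. -/
abbrev E (n : ℕ) := EuclideanSpace ℝ (Fin n)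

/-- A controller from time `τ` with at most `i` switches: a finite sequence
`(q₀,t₀),…,(q_k,t_k)` with `k ≤ i`, `t 0 = τ` and nondecreasing switching times. -/
structure Controller (Q : Type) (τ : ℝ) (i : ℕ) where
  k : ℕ
  hk : k ≤ i
  q : ℕ → Q
  t : ℕ → ℝ
  ht0 : t 0 = τ
  mono : ∀ j, j < k → t j ≤ t (j + 1)

/-- `Sat x τ`: the signal `x` satisfies `φ₁ U_{I ⊖ τ} φ₂` from time `τ`. -/
def Sat {n : ℕ} (φ₁ φ₂ : E n → ℝ → Prop) (l u : ℝ) (x : ℝ → E n) (τ : ℝ) : Prop :=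
  ∃ τ', τ ≤ τ' ∧ τ' - τ ∈ Set.Icc (l - τ) (u - τ) ∩ Set.Ici (0 : ℝ) ∧
    φ₂ (x τ') τ' ∧ ∀ τ'' ∈ Set.Icc τ τ', φ₁ (x τ'') τ''

/-- `x` is a trajectory under the controller `c` from `(x₀, τ)`. -/
def IsTraj {n : ℕ} {Q : Type} (f : Q → E n → E n) {τ : ℝ} {i : ℕ}
    (c : Controller Q τ i) (x₀ : E n) (x : ℝ → E n) : Prop :=
  ContinuousOn x (Set.Ici τ) ∧ x τ = x₀ ∧
    ∀ j ≤ c.k, ∀ s : ℝ, c.t j ≤ s → (j < c.k → s < c.t (j + 1)) →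
      HasDerivWithinAt x (f (c.q j) (x s)) (Set.Ici s) s

/-- The state-time set `X q i`. -/
def X {n : ℕ} {Q : Type} (φ₁ φ₂ : E n → ℝ → Prop) (l u : ℝ) (f : Q → E n → E n)
    (q : Q) (i : ℕ) : Set (E n × ℝ) :=
  {p | 0 ≤ p.2 ∧ ∃ c : Controller Q p.2 i, c.q 0 = q ∧
    ∃ x : ℝ → E n, IsTraj f c p.1 x ∧ Sat φ₁ φ₂ l u x p.2}

/-- A mode-`q` trajectory from `(x₀, τ)` (trajectory under the single-element
controller `(q, τ)`). -/
def IsModeTraj {n : ℕ} {Q : Type} (f : Q → E n → E n) (q : Q) (x₀ : E n) (τ : ℝ)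
    (x : ℝ → E n) : Prop :=
  ContinuousOn x (Set.Ici τ) ∧ x τ = x₀ ∧
    ∀ s : ℝ, τ ≤ s → HasDerivWithinAt x (f q (x s)) (Set.Ici s) s

/-- `Ψ` is a global flow for mode `q`. -/
def IsGlobalFlow {n : ℕ} {Q : Type} (f : Q → E n → E n) (q : Q)
    (Ψ : E n → ℝ → ℝ → E n) : Prop :=
  (∀ x₀ τ, Ψ x₀ τ τ = x₀) ∧
  (∀ (x₀ : E n) (τ t : ℝ), HasDerivAt (fun s => Ψ x₀ τ s) (f q (Ψ x₀ τ t)) t) ∧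
  (∀ (x₀ : E n) (τ : ℝ) (x : ℝ → E n),
      IsModeTraj f q x₀ τ x → Set.EqOn x (Ψ x₀ τ) (Set.Ici τ))

/-- Relaxing the switching bound of a controller. -/
def Controller.relax {Q : Type} {τ : ℝ} {i j : ℕ} (h : i ≤ j)
    (c : Controller Q τ i) : Controller Q τ j :=
  ⟨c.k, c.hk.trans h, c.q, c.t, c.ht0, c.mono⟩

/-- Prepend the pair `(q, τ)` to a controller from time `τ' ≥ τ`. -/
def Controller.prepend {Q : Type} {τ' : ℝ} {i : ℕ} (q : Q) (τ : ℝ) (h : τ ≤ τ')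
    (c : Controller Q τ' i) : Controller Q τ (i + 1) where
  k := c.k + 1
  hk := Nat.succ_le_succ c.hk
  q := fun j => match j with | 0 => q | Nat.succ m => c.q m
  t := fun j => match j with | 0 => τ | Nat.succ m => c.t m
  ht0 := rfl
  mono := by
    intro j hj
    cases j with
    | zero => show τ ≤ c.t 0; rw [c.ht0]; exact h
    | succ m =>
        show c.t m ≤ c.t (m + 1)
        exact c.mono m (Nat.lt_of_succ_lt_succ hj)

section Aux

lemma ctrl_chain {Q : Type} {τ : ℝ} {i : ℕ} (c : Controller Q τ i) :
    ∀ j₁ j₂, j₁ ≤ j₂ → j₂ ≤ c.k → c.t j₁ ≤ c.t j₂ := by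
  intro j₁ j₂ h12 h2k
  induction j₂ with
  | zero => simp_all [Nat.le_zero.mp h12]
  | succ m ih =>
    rcases Nat.lt_or_ge j₁ (m+1) with h | h
    · exact (ih (by omega) (by omega)).trans (c.mono m (by omega))
    · have : j₁ = m + 1 := by omega
      simp [this]

lemma ctrl_find_piece {Q : Type} {τ : ℝ} {i : ℕ} (c : Controller Q τ i) :
    ∀ m, m ≤ c.k → ∀ s : ℝ, c.t 0 ≤ s → s < c.t m →
      ∃ j, j < m ∧ c.t j ≤ s ∧ s < c.t (j + 1) := by
  intro m
  induction m with
  | zero => intro _ s h0 hs; exact absurd (h0.trans_lt hs) (lt_irrefl _)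
  | succ m ih =>
    intro hm s h0 hs
    by_cases h : s < c.t m
    · obtain ⟨j, hj, h1, h2⟩ := ih (by omega) s h0 h
      exact ⟨j, by omega, h1, h2⟩
    · exact ⟨m, by omega, le_of_not_gt h, hs⟩

lemma linear_of_rderiv {n : ℕ} {x : ℝ → E n} {v : E n} {τ T : ℝ}
    (hc : ContinuousOn x (Icc τ T))
    (hd : ∀ s ∈ Ico τ T, HasDerivWithinAt x v (Ici s) s) :
    ∀ t ∈ Icc τ T, x t = x τ + (t - τ) • v := by
  have H := constant_of_has_deriv_right_zero (f := fun s => x s - (s - τ) • v)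
    (a := τ) (b := T)
    (hc.sub (Continuous.continuousOn (by continuity)))
    (fun y hy => by
      exact ((hd y hy).sub
        ((((hasDerivAt_id y).sub_const τ).smul_const v).hasDerivWithinAt)).congr_deriv (by simp))
  intro t ht
  have h2 := H t ht
  simp only [sub_self, zero_smul, sub_zero] at h2
  linear_combination (norm := module) h2

lemma lin_hasDeriv {n : ℕ} (p v : E n) (b s : ℝ) :
    HasDerivAt (fun t : ℝ => p + (t - b) • v) v s := by
  simpa using (((hasDerivAt_id s).sub_const b).smul_const v).const_add p

/-- Zero-switch membership: if `φ₂` and `φ₁` both hold at `(p, σ)` with `l ≤ σ ≤ u`,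
then `(p, σ) ∈ X q' m` for any mode and any switch bound. -/
lemma mem_X_zero {n : ℕ} {Q : Type} (φ₁ φ₂ : E n → ℝ → Prop) (l u : ℝ) (a : Q → E n)
    (q' : Q) (m : ℕ) (p : E n) (σ : ℝ) (h0 : 0 ≤ σ) (hlσ : l ≤ σ) (hσu : σ ≤ u)
    (h2 : φ₂ p σ) (h1 : φ₁ p σ) :
    (p, σ) ∈ X φ₁ φ₂ l u (fun q _ => a q) q' m := by
  refine ⟨h0, ⟨0, Nat.zero_le _, fun _ => q', fun _ => σ, rfl, fun j hj => le_rfl⟩, rfl,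
    fun t => p + (t - σ) • a q', ⟨?_, by simp, ?_⟩, σ, le_rfl, ?_, by simpa, ?_⟩
  · exact Continuous.continuousOn (by continuity)
  · intro j hj s hs hlt
    exact (lin_hasDeriv p (a q') σ s).hasDerivWithinAt
  · constructor
    · constructor <;> simp <;> linarith
    · simp
  · intro τ'' hτ''
    have : τ'' = σ := le_antisymm hτ''.2 hτ''.1
    subst this
    simpa

end Aux

/-- Paper's Corollary 2, inductive case: `X q i` for constant dynamics. -/
theorem stmt11 {n : ℕ} (φ₁ φ₂ : E n → ℝ → Prop) (l u : ℝ) (hl : 0 ≤ l) (hlu : l ≤ u)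
    (Q : Type) [Fintype Q] [Nontrivial Q] (a : Q → E n)
    (q : Q) (i : ℕ) (hi : 1 ≤ i) (x₀ : E n) (τ : ℝ) (hτ : 0 ≤ τ) :
    (x₀, τ) ∈ X φ₁ φ₂ l u (fun q _ => a q) q i ↔
      ∃ q' : Q, q' ≠ q ∧ ∃ δ ≥ (0 : ℝ),
        (x₀ + δ • a q, τ + δ) ∈ X φ₁ φ₂ l u (fun q _ => a q) q' (i - 1) ∧
        ∀ h ∈ Set.Icc (0 : ℝ) δ, φ₁ (x₀ + h • a q) (τ + h) := by
  classical
  constructor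
  · rintro ⟨h0, c, hc0, x, ⟨hxc, hx0, hxd⟩, τ', hττ', ⟨⟨hl1, hl2⟩, -⟩, hφ2, hφ1⟩
    have hlτ' : l ≤ τ' := by linarith
    have hτ'u : τ' ≤ u := by linarith
    -- common final step once we know `x` is linear on `[τ, τ']`
    have final : ∀ q', q' ≠ q → (∀ t ∈ Icc τ τ', x t = x₀ + (t - τ) • a q) →
        (∃ q' : Q, q' ≠ q ∧ ∃ δ ≥ (0 : ℝ),
          (x₀ + δ • a q, τ + δ) ∈ X φ₁ φ₂ l u (fun q _ => a q) q' (i - 1) ∧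
          ∀ h ∈ Set.Icc (0 : ℝ) δ, φ₁ (x₀ + h • a q) (τ + h)) := by
      intro q' hq' hlin
      refine ⟨q', hq', τ' - τ, by linarith, ?_, ?_⟩
      · have e1 : x₀ + (τ' - τ) • a q = x τ' := (hlin τ' ⟨hττ', le_rfl⟩).symm
        have e2 : τ + (τ' - τ) = τ' := by ring
        rw [e2, e1]
        exact mem_X_zero φ₁ φ₂ l u a q' (i - 1) (x τ') τ' (by linarith) hlτ' hτ'u hφ2
          (hφ1 τ' ⟨hττ', le_rfl⟩)
      · intro h hh
        have h1 : τ + h ∈ Icc τ τ' := ⟨by linarith [hh.1], by linarith [hh.2]⟩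
        have := hφ1 (τ + h) h1
        rw [hlin (τ + h) h1] at this
        simpa using this
    by_cases hex : ∃ j, j ≤ c.k ∧ c.q j ≠ q
    · set J := Nat.find hex with hJdef
      obtain ⟨hJk, hqJ⟩ : J ≤ c.k ∧ c.q J ≠ q := Nat.find_spec hex
      have hmin : ∀ j < J, c.q j = q := by
        intro j hj
        have h := Nat.find_min hex hj
        push_neg at h
        exact h (by omega)
      have hJpos : 1 ≤ J := by
        rcases Nat.eq_zero_or_pos J with h | h
        · exact absurd hc0 (h ▸ hqJ)
        · exact h
      have htj : τ ≤ c.t J := by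
        have := ctrl_chain c 0 J (Nat.zero_le _) hJk
        rwa [c.ht0] at this
      have hderiv_pre : ∀ s ∈ Ico τ (c.t J), HasDerivWithinAt x (a q) (Ici s) s := by
        intro s hs
        have h0s : c.t 0 ≤ s := by rw [c.ht0]; exact hs.1
        obtain ⟨j, hj, h1, h2⟩ := ctrl_find_piece c J hJk s h0s hs.2
        have := hxd j (by omega) s h1 (fun _ => h2)
        rwa [hmin j hj] at this
      have hlinJ : ∀ t ∈ Icc τ (c.t J), x t = x₀ + (t - τ) • a q := by
        have H := linear_of_rderiv (hxc.mono Icc_subset_Ici_self) hderiv_pre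
        intro t ht; rw [H t ht, hx0]
      by_cases hcase : τ' ≤ c.t J
      · exact final (c.q J) hqJ (fun t ht => hlinJ t ⟨ht.1, ht.2.trans hcase⟩)
      · push_neg at hcase
        refine ⟨c.q J, hqJ, c.t J - τ, by linarith, ?_, ?_⟩
        · have e2 : τ + (c.t J - τ) = c.t J := by ring
          have e1 : x₀ + (c.t J - τ) • a q = x (c.t J) := (hlinJ _ ⟨htj, le_rfl⟩).symm
          rw [e2, e1]
          refine ⟨by linarith,
            ⟨c.k - J, by have := c.hk; omega, fun j => c.q (J + j), fun j => c.t (J + j), rfl,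
              fun j hj => c.mono (J + j) (by omega)⟩, rfl, x,
            ⟨hxc.mono (Ici_subset_Ici.mpr htj), rfl, ?_⟩,
            τ', by linarith, ⟨⟨by linarith, by linarith⟩, Set.mem_Ici.mpr (by linarith)⟩,
            hφ2, ?_⟩
          · intro j hj s hs hlt
            have hj' : j ≤ c.k - J := hj
            have hs' : c.t (J + j) ≤ s := hs
            have hjk : J + j < c.k → j < c.k - J := by omega
            have hlt' : J + j < c.k → s < c.t (J + j + 1) := fun h => hlt (hjk h)
            exact hxd (J + j) (by omega) s hs' hlt'
          · intro τ'' hτ''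
            exact hφ1 τ'' ⟨htj.trans hτ''.1, hτ''.2⟩
        · intro h hh
          have h1 : τ + h ∈ Icc τ (c.t J) := ⟨by linarith [hh.1], by linarith [hh.2]⟩
          have h2 : τ + h ∈ Icc τ τ' := ⟨by linarith [hh.1], by linarith [hh.2]⟩
          have := hφ1 (τ + h) h2
          rw [hlinJ (τ + h) h1] at this
          simpa using this
    · push_neg at hex
      obtain ⟨q', hq'⟩ := exists_ne q
      have hderiv_all : ∀ s ∈ Ico τ τ', HasDerivWithinAt x (a q) (Ici s) s := by
        intro s hs
        by_cases h : s < c.t c.k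
        · obtain ⟨j, hj, h1, h2⟩ := ctrl_find_piece c c.k le_rfl s
            (by rw [c.ht0]; exact hs.1) h
          have := hxd j (by omega) s h1 (fun _ => h2)
          rwa [hex j (by omega)] at this
        · have := hxd c.k le_rfl s (le_of_not_gt h) (fun h' => absurd h' (lt_irrefl _))
          rwa [hex c.k le_rfl] at this
      have hlin : ∀ t ∈ Icc τ τ', x t = x₀ + (t - τ) • a q := by
        have H := linear_of_rderiv (hxc.mono Icc_subset_Ici_self) hderiv_all
        intro t ht; rw [H t ht, hx0]
      exact final q' hq' hlin
  · rintro ⟨q', hq', δ, hδ, ⟨h0', c', hc'0, x', ⟨hx'c, hx'0, hx'd⟩,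
      τs, hτs1, ⟨⟨hm1, hm2⟩, hm3⟩, hφ2, hφ1'⟩, hφ1seg⟩
    have hm3' : (0:ℝ) ≤ τs - (τ + δ) := hm3
    have hx'0' : x' (τ + δ) = x₀ + δ • a q := hx'0
    have hτs' : τ + δ ≤ τs := hτs1
    have hm1' : l - (τ + δ) ≤ τs - (τ + δ) := hm1
    have hm2' : τs - (τ + δ) ≤ u - (τ + δ) := hm2
    have hφ1'' : ∀ τ'' ∈ Icc (τ + δ) τs, φ₁ (x' τ'') τ'' := hφ1'
    have hx'c' : ContinuousOn x' (Ici (τ + δ)) := hx'c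
    have hct0 : c'.t 0 = τ + δ := c'.ht0
    set x : ℝ → E n := fun t => if t ≤ τ + δ then x₀ + (t - τ) • a q else x' t with hxdef
    have hxeqlin : ∀ t, t ≤ τ + δ → x t = x₀ + (t - τ) • a q := by
      intro t ht; simp [hxdef, ht]
    have hxeq' : ∀ t, τ + δ ≤ t → x t = x' t := by
      intro t ht
      by_cases h : t ≤ τ + δ
      · have he : t = τ + δ := le_antisymm h ht
        rw [hxeqlin t h, he, hx'0', show τ + δ - τ = δ by ring]
      · simp [hxdef, h]
    have hxcont : Continuous x := by
      refine continuous_if_le continuous_id continuous_const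
        (Continuous.continuousOn (by continuity)) ?_ ?_
      · exact hx'c'
      · intro t ht
        change t = τ + δ at ht
        subst ht
        rw [hx'0', show τ + δ - τ = δ by ring]
    have hbase : τ ≤ τ + δ := by linarith
    refine ⟨hτ, (Controller.prepend q τ hbase c').relax (by omega), ?_, x,
      ⟨hxcont.continuousOn, ?_, ?_⟩, τs, by linarith, ⟨⟨by linarith, by linarith⟩,
        Set.mem_Ici.mpr (by linarith)⟩, ?_, ?_⟩
    · show (Controller.prepend q τ hbase c').q 0 = q
      rfl
    · rw [hxeqlin τ hbase]; simp
    · have hck : ((Controller.prepend q τ hbase c').relax (by omega : i - 1 + 1 ≤ i)).k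
          = c'.k + 1 := rfl
      intro j hj s hs hlt
      match j with
      | 0 =>
        have hsδ : s < τ + δ := by
          have h1 := hlt (by rw [hck]; omega)
          have h2 : ((Controller.prepend q τ hbase c').relax (by omega : i - 1 + 1 ≤ i)).t 1
              = τ + δ := hct0
          rwa [h2] at h1
        have hld : HasDerivWithinAt (fun t => x₀ + (t - τ) • a q) (a q) (Ici s) s :=
          (lin_hasDeriv _ _ _ _).hasDerivWithinAt
        show HasDerivWithinAt x (a q) (Ici s) s
        refine hld.congr_of_eventuallyEq ?_ (hxeqlin s hsδ.le)
        have hmem : Iio (τ + δ) ∈ nhdsWithin s (Ici s) :=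
          mem_nhdsWithin_of_mem_nhds (Iio_mem_nhds hsδ)
        filter_upwards [hmem] with t ht
        exact hxeqlin t ht.le
      | Nat.succ m =>
        have hm : m ≤ c'.k := by rw [hck] at hj; omega
        have hs' : c'.t m ≤ s := hs
        have hsτδ : τ + δ ≤ s := by
          have h := ctrl_chain c' 0 m (Nat.zero_le _) hm
          rw [hct0] at h
          linarith
        have hd := hx'd m hm s hs' (fun h => hlt (by rw [hck]; omega))
        show HasDerivWithinAt x (a (c'.q m)) (Ici s) s
        have hd' : HasDerivWithinAt x' (a (c'.q m)) (Ici s) s := hd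
        exact hd'.congr (fun t ht => hxeq' t (hsτδ.trans ht)) (hxeq' s hsτδ)
    · rw [hxeq' τs hτs']; exact hφ2
    · intro τ'' h''
      by_cases hc : τ'' ≤ τ + δ
      · rw [hxeqlin τ'' hc]
        have := hφ1seg (τ'' - τ) ⟨by linarith [h''.1], by linarith⟩
        rwa [show τ + (τ'' - τ) = τ'' from by ring] at this
      · push_neg at hc
        rw [hxeq' τ'' hc.le]
        exact hφ1'' τ'' ⟨hc.le, h''.2⟩
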